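/- For a Leibniz algebra g, the vector space g • g = coker(d : g⊗g⊗g → g⊗g) carries a Leibniz algebra structure with bracket [x•y, x'•y'] = [x,y] • [x',y']. -/
import Mathlib


universe u v w

/-- The Leibniz identity for a bilinear bracket. -/
def LeibnizId {K : Type u} [Field K] {L : Type*} [AddCommGroup L] [Module K L]
    (b : L →ₗ[K] L →ₗ[K] L) : Prop :=
  ∀ x y z : L, b x (b y z) = b (b x y) z - b (b x z) y

/-- A linear map preserving the brackets. -/
def IsLeibnizHom {K : Type u} [Field K] {L M : Type*} [AddCommGroup L] [Module K L]
    [AddCommGroup M] [Module K M]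
    (bL : L →ₗ[K] L →ₗ[K] L) (bM : M →ₗ[K] M →ₗ[K] M) (f : L →ₗ[K] M) : Prop :=
  ∀ x y : L, f (bL x y) = bM (f x) (f y)

/-- A two-sided ideal of a Leibniz algebra. -/
def IsLeibnizIdeal {K : Type u} [Field K] {L : Type*} [AddCommGroup L] [Module K L]
    (b : L →ₗ[K] L →ₗ[K] L) (S : Submodule K L) : Prop :=
  ∀ a ∈ S, ∀ x : L, b a x ∈ S ∧ b x a ∈ S

open TensorProduct in
/-- For a Leibniz algebra `g`, the vector space `g • g = coker(d₃ : g⊗g⊗g → g⊗g)`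
carries a Leibniz algebra structure with bracket `[x•y, x'•y'] = [x,y] • [x',y']`. -/
theorem bullet_leibniz_structure {K : Type u} [Field K] {L : Type v}
    [AddCommGroup L] [Module K L] (b : L →ₗ[K] L →ₗ[K] L) (hb : LeibnizId b)
    (d3 : (L ⊗[K] L) ⊗[K] L →ₗ[K] L ⊗[K] L)
    (hd3 : ∀ x y z : L,
      d3 ((x ⊗ₜ[K] y) ⊗ₜ[K] z) = (b x y) ⊗ₜ[K] z - (b x z) ⊗ₜ[K] y - x ⊗ₜ[K] (b y z)) :
    ∃ B : ((L ⊗[K] L) ⧸ LinearMap.range d3) →ₗ[K]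
          ((L ⊗[K] L) ⧸ LinearMap.range d3) →ₗ[K] ((L ⊗[K] L) ⧸ LinearMap.range d3),
      (∀ x y x' y' : L,
        B (Submodule.Quotient.mk (x ⊗ₜ[K] y)) (Submodule.Quotient.mk (x' ⊗ₜ[K] y')) =
          Submodule.Quotient.mk ((b x y) ⊗ₜ[K] (b x' y'))) ∧
      LeibnizId B := by
  classical
  set R := LinearMap.range d3 with hR
  set β : L ⊗[K] L →ₗ[K] L := TensorProduct.lift b with hβ
  have hker : R ≤ LinearMap.ker β := by
    rintro _ ⟨t, rfl⟩
    induction t using TensorProduct.induction_on with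
    | zero => simp
    | tmul u z =>
      induction u using TensorProduct.induction_on with
      | zero => simp
      | tmul x y =>
        simp only [LinearMap.mem_ker, hd3, map_sub, hβ, TensorProduct.lift.tmul]
        have := hb x y z
        abel_nf
        rw [this]; abel
      | add u v hu hv =>
        simp only [LinearMap.mem_ker] at *
        rw [add_tmul, map_add, map_add, hu, hv, add_zero]
    | add u v hu hv =>
      simp only [LinearMap.mem_ker, map_add] at *
      simp [hu, hv]
  set βq : ((L ⊗[K] L) ⧸ R) →ₗ[K] L := R.liftQ β hker with hβq
  set C : L →ₗ[K] L →ₗ[K] ((L ⊗[K] L) ⧸ R) :=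
    LinearMap.compr₂ (TensorProduct.mk K L L) R.mkQ with hC
  set B := (C.comp βq).compl₂ βq with hB
  have hCkey : ∀ x y z : L, C x (b y z) = C (b x y) z - C (b x z) y := by
    intro x y z
    have hm : (b x y) ⊗ₜ[K] z - (b x z) ⊗ₜ[K] y - x ⊗ₜ[K] (b y z) ∈ R := by
      rw [← hd3 x y z]; exact ⟨_, rfl⟩
    have : R.mkQ ((b x y) ⊗ₜ[K] z - (b x z) ⊗ₜ[K] y - x ⊗ₜ[K] (b y z)) = 0 := by
      simpa using (Submodule.Quotient.mk_eq_zero R).2 hm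
    simp only [map_sub] at this
    simp only [hC, LinearMap.compr₂_apply, TensorProduct.mk_apply]
    rw [← sub_eq_zero]
    have h2 : R.mkQ (x ⊗ₜ[K] (b y z)) - (R.mkQ ((b x y) ⊗ₜ[K] z) - R.mkQ ((b x z) ⊗ₜ[K] y)) =
        -(R.mkQ ((b x y) ⊗ₜ[K] z) - R.mkQ ((b x z) ⊗ₜ[K] y) - R.mkQ (x ⊗ₜ[K] (b y z))) := by
      abel
    rw [h2, this, neg_zero]
  refine ⟨B, ?_, ?_⟩
  · intro x y x' y'
    simp [hB, hβq, hβ, hC, Submodule.Quotient.mk''_eq_mk]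
  · intro p q r
    have hβB : ∀ p q, βq (B p q) = b (βq p) (βq q) := by
      intro p q
      simp [hB, hβq, hβ, hC]
    have hBapp : ∀ p q, B p q = C (βq p) (βq q) := fun p q => rfl
    rw [hBapp p (B q r), hβB q r, hBapp (B p q) r, hβB p q, hBapp (B p r) q, hβB p r]
    exact hCkey (βq p) (βq q) (βq r)
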